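/- For every y ∈ {0,1} and m ∈ {0,1}: if P(Y=y, M=m | X=1) + P(Y=1−y, M=m | X=0) > 1, then μ({M1=m} ∩ {M0=m}) > 0 and [P(Y=y, M=m | X=1) + P(Y=1−y, M=m | X=0) − 1] / [P(M=m | X=1) − P(M=1−m | X=0)] ≤ [P_c(y,1−y,m,m) − P_c(1−y,y,m,m)] / μ({M1=m} ∩ {M0=m}); moreover the right-hand side equals P(Y1=y, Y0=1−y | M1=m, M0=m) − P(Y1=1−y, Y0=y | M1=m, M0=m), where P(A | B) := μ(A ∩ B)/μ(B). -/

import Mathlib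

open MeasureTheory ProbabilityTheory

/-- Conditional probability `P(A | B) = mu(A ∩ B) / mu(B)` as a real number. -/
noncomputable def condP {Ω : Type*} [MeasurableSpace Ω] (μ : Measure Ω)
    (A B : Set Ω) : ℝ :=
  (μ (A ∩ B)).toReal / (μ B).toReal

/-- Counterfactual probability `P_c(y1, y0, m1, m0)`. -/
noncomputable def Pc {Ω : Type*} [MeasurableSpace Ω] (μ : Measure Ω)
    (Y1 Y0 M1 M0 : Ω → ℕ) (y1 y0 m1 m0 : ℕ) : ℝ :=
  (μ {ω | Y1 ω = y1 ∧ Y0 ω = y0 ∧ M1 ω = m1 ∧ M0 ω = m0}).toReal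

private lemma aux_ineq (a b p q pp pn c1 c2 r : ℝ)
    (h1 : 1 < a + b) (hF2 : a + b + pn ≤ 1 + pp) (hF3 : a ≤ p) (hF3' : b + q ≤ 1)
    (hF4 : p ≤ q + r) (hF5 : pn + c2 + a ≤ p) (hF5' : pn + c1 + b + q ≤ 1)
    (hF6 : r = pp + pn + c1 + c2) (hpn : 0 ≤ pn) :
    (a + b - 1) / (p - q) ≤ (pp - pn) / r := by
  have hd : 0 < p - q := by linarith
  have hr : 0 < r := by linarith
  rw [div_le_div_iff₀ hd hr]
  nlinarith [mul_nonneg (by linarith : (0:ℝ) ≤ pp - pn - (a+b-1))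
      (by linarith : (0:ℝ) ≤ (p-q) - (a+b-1)),
    mul_nonneg (by linarith : (0:ℝ) ≤ a+b-1)
      (by linarith : (0:ℝ) ≤ (p-q) - (a+b-1) - 2*pn - c1 - c2)]

theorem statement4
    {Ω : Type*} [MeasurableSpace Ω] (μ : Measure Ω) [IsProbabilityMeasure μ]
    (Y1 Y0 M1 M0 X Y M : Ω → ℕ)
    (hY1meas : Measurable Y1) (hY0meas : Measurable Y0)
    (hM1meas : Measurable M1) (hM0meas : Measurable M0)
    (hXmeas : Measurable X)
    (hY1bin : ∀ ω, Y1 ω ≤ 1) (hY0bin : ∀ ω, Y0 ω ≤ 1)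
    (hM1bin : ∀ ω, M1 ω ≤ 1) (hM0bin : ∀ ω, M0 ω ≤ 1)
    (hXbin : ∀ ω, X ω ≤ 1)
    (hXpos : 0 < μ {ω | X ω = 1}) (hXlt : μ {ω | X ω = 1} < 1)
    (hindep : IndepFun X (fun ω => (Y1 ω, Y0 ω, M1 ω, M0 ω)) μ)
    (hYcons1 : ∀ ω, X ω = 1 → Y ω = Y1 ω)
    (hYcons0 : ∀ ω, X ω = 0 → Y ω = Y0 ω)
    (hMcons1 : ∀ ω, X ω = 1 → M ω = M1 ω)
    (hMcons0 : ∀ ω, X ω = 0 → M ω = M0 ω)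
    (y m : ℕ) (hy : y ≤ 1) (hm : m ≤ 1)
    (hemp : condP μ {ω | Y ω = y ∧ M ω = m} {ω | X ω = 1}
        + condP μ {ω | Y ω = 1 - y ∧ M ω = m} {ω | X ω = 0} > 1) :
    0 < μ ({ω | M1 ω = m} ∩ {ω | M0 ω = m}) ∧
    (condP μ {ω | Y ω = y ∧ M ω = m} {ω | X ω = 1}
        + condP μ {ω | Y ω = 1 - y ∧ M ω = m} {ω | X ω = 0} - 1)
      / (condP μ {ω | M ω = m} {ω | X ω = 1}
        - condP μ {ω | M ω = 1 - m} {ω | X ω = 0})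
      ≤ (Pc μ Y1 Y0 M1 M0 y (1 - y) m m - Pc μ Y1 Y0 M1 M0 (1 - y) y m m)
        / (μ ({ω | M1 ω = m} ∩ {ω | M0 ω = m})).toReal ∧
    (Pc μ Y1 Y0 M1 M0 y (1 - y) m m - Pc μ Y1 Y0 M1 M0 (1 - y) y m m)
        / (μ ({ω | M1 ω = m} ∩ {ω | M0 ω = m})).toReal
      = condP μ {ω | Y1 ω = y ∧ Y0 ω = 1 - y} {ω | M1 ω = m ∧ M0 ω = m}
        - condP μ {ω | Y1 ω = 1 - y ∧ Y0 ω = y} {ω | M1 ω = m ∧ M0 ω = m} := by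
  classical
  -- positivity of the two treatment arms
  have hX0pos : 0 < μ {ω | X ω = 0} := by
    by_contra h
    push_neg at h
    have h0 : μ {ω | X ω = 0} = 0 := le_antisymm h zero_le
    have huniv : (Set.univ : Set Ω) = {ω | X ω = 0} ∪ {ω | X ω = 1} := by
      ext ω
      simp only [Set.mem_univ, Set.mem_union, Set.mem_setOf_eq, true_iff]
      have := hXbin ω; omega
    have hle : (1 : ENNReal) ≤ μ {ω | X ω = 0} + μ {ω | X ω = 1} := by
      rw [← measure_univ (μ := μ), huniv]
      exact measure_union_le _ _
    rw [h0, zero_add] at hle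
    exact absurd hle (not_le.mpr hXlt)
  -- conditional probability via independence
  have hcd : ∀ (E : Set Ω) (S : Set (ℕ × ℕ × ℕ × ℕ)) (x : ℕ), MeasurableSet S →
      0 < μ {ω | X ω = x} →
      E ∩ {ω | X ω = x} = ((fun ω => (Y1 ω, Y0 ω, M1 ω, M0 ω)) ⁻¹' S) ∩ {ω | X ω = x} →
      condP μ E {ω | X ω = x}
        = (μ ((fun ω => (Y1 ω, Y0 ω, M1 ω, M0 ω)) ⁻¹' S)).toReal := by
    intro E S x hS hx hE
    unfold condP
    rw [hE, Set.inter_comm]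
    have hxs : {ω | X ω = x} = X ⁻¹' {x} := rfl
    rw [hxs, hindep.measure_inter_preimage_eq_mul _ _ (measurableSet_singleton x) hS,
      ENNReal.toReal_mul, mul_comm, mul_div_assoc, div_self, mul_one]
    rw [← hxs]
    exact (ENNReal.toReal_pos hx.ne' (measure_ne_top μ _)).ne'
  -- identify the four observable quantities
  have ha : condP μ {ω | Y ω = y ∧ M ω = m} {ω | X ω = 1}
      = (μ {ω | Y1 ω = y ∧ M1 ω = m}).toReal := by
    refine hcd _ {p : ℕ × ℕ × ℕ × ℕ | p.1 = y ∧ p.2.2.1 = m} 1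
      ((measurable_fst (measurableSet_singleton y)).inter
        (measurable_snd.snd.fst (measurableSet_singleton m))) hXpos ?_
    ext ω
    by_cases hx : X ω = 1 <;>
      simp [Set.mem_inter_iff, Set.mem_setOf_eq, hx, hYcons1 ω, hMcons1 ω]
  have hb : condP μ {ω | Y ω = 1 - y ∧ M ω = m} {ω | X ω = 0}
      = (μ {ω | Y0 ω = 1 - y ∧ M0 ω = m}).toReal := by
    refine hcd _ {p : ℕ × ℕ × ℕ × ℕ | p.2.1 = 1 - y ∧ p.2.2.2 = m} 0
      ((measurable_snd.fst (measurableSet_singleton (1 - y))).inter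
        (measurable_snd.snd.snd (measurableSet_singleton m))) hX0pos ?_
    ext ω
    by_cases hx : X ω = 0 <;>
      simp [Set.mem_inter_iff, Set.mem_setOf_eq, hx, hYcons0 ω, hMcons0 ω]
  have hp : condP μ {ω | M ω = m} {ω | X ω = 1} = (μ {ω | M1 ω = m}).toReal := by
    refine hcd _ {p : ℕ × ℕ × ℕ × ℕ | p.2.2.1 = m} 1
      (measurable_snd.snd.fst (measurableSet_singleton m)) hXpos ?_
    ext ω
    by_cases hx : X ω = 1 <;>
      simp [Set.mem_inter_iff, Set.mem_setOf_eq, hx, hMcons1 ω]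
  have hq : condP μ {ω | M ω = 1 - m} {ω | X ω = 0} = (μ {ω | M0 ω = 1 - m}).toReal := by
    refine hcd _ {p : ℕ × ℕ × ℕ × ℕ | p.2.2.2 = 1 - m} 0
      (measurable_snd.snd.snd (measurableSet_singleton (1 - m))) hX0pos ?_
    ext ω
    by_cases hx : X ω = 0 <;>
      simp [Set.mem_inter_iff, Set.mem_setOf_eq, hx, hMcons0 ω]
  -- measurable sets
  have mA : MeasurableSet {ω | Y1 ω = y ∧ M1 ω = m} :=
    (hY1meas (measurableSet_singleton y)).inter (hM1meas (measurableSet_singleton m))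
  have mB : MeasurableSet {ω | Y0 ω = 1 - y ∧ M0 ω = m} :=
    (hY0meas (measurableSet_singleton (1 - y))).inter (hM0meas (measurableSet_singleton m))
  have m4 : ∀ a' b' c' d' : ℕ,
      MeasurableSet {ω | Y1 ω = a' ∧ Y0 ω = b' ∧ M1 ω = c' ∧ M0 ω = d'} := fun a' b' c' d' =>
    (hY1meas (measurableSet_singleton a')).inter
      ((hY0meas (measurableSet_singleton b')).inter
        ((hM1meas (measurableSet_singleton c')).inter (hM0meas (measurableSet_singleton d'))))
  have mM1 : MeasurableSet {ω | M1 ω = m} := hM1meas (measurableSet_singleton m)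
  have mM0 : MeasurableSet {ω | M0 ω = m} := hM0meas (measurableSet_singleton m)
  -- real-valued measure lemmas
  have nu_add : ∀ S T : Set Ω, MeasurableSet T → Disjoint S T →
      (μ (S ∪ T)).toReal = (μ S).toReal + (μ T).toReal := by
    intro S T hT hd
    rw [measure_union hd hT, ENNReal.toReal_add (measure_ne_top μ S) (measure_ne_top μ T)]
  have nu_mono : ∀ S T : Set Ω, S ⊆ T → (μ S).toReal ≤ (μ T).toReal := fun S T h =>
    ENNReal.toReal_mono (measure_ne_top μ T) (measure_mono h)
  have nu_le_one : ∀ S : Set Ω, (μ S).toReal ≤ 1 := fun S => by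
    simpa using ENNReal.toReal_mono (by norm_num) (prob_le_one (μ := μ) (s := S))
  have nu_ie : ∀ S T : Set Ω, MeasurableSet T →
      (μ (S ∪ T)).toReal + (μ (S ∩ T)).toReal = (μ S).toReal + (μ T).toReal := by
    intro S T hT
    rw [← ENNReal.toReal_add (measure_ne_top μ _) (measure_ne_top μ _),
      ← ENNReal.toReal_add (measure_ne_top μ _) (measure_ne_top μ _),
      measure_union_add_inter S hT]
  have nu_compl : ∀ S : Set Ω, MeasurableSet S → (μ S).toReal + (μ Sᶜ).toReal = 1 := by
    intro S hS
    rw [← nu_add S Sᶜ hS.compl disjoint_compl_right, Set.union_compl_self, measure_univ,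
      ENNReal.toReal_one]
  -- abbreviations (real numbers)
  set a := (μ {ω | Y1 ω = y ∧ M1 ω = m}).toReal with ha'
  set b := (μ {ω | Y0 ω = 1 - y ∧ M0 ω = m}).toReal with hb'
  set p := (μ {ω | M1 ω = m}).toReal with hp'
  set q := (μ {ω | M0 ω = 1 - m}).toReal with hq'
  set pp := (μ {ω | Y1 ω = y ∧ Y0 ω = 1 - y ∧ M1 ω = m ∧ M0 ω = m}).toReal with hpp'
  set pn := (μ {ω | Y1 ω = 1 - y ∧ Y0 ω = y ∧ M1 ω = m ∧ M0 ω = m}).toReal with hpn'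
  set c1 := (μ {ω | Y1 ω = y ∧ Y0 ω = y ∧ M1 ω = m ∧ M0 ω = m}).toReal with hc1'
  set c2 := (μ {ω | Y1 ω = 1 - y ∧ Y0 ω = 1 - y ∧ M1 ω = m ∧ M0 ω = m}).toReal with hc2'
  set r := (μ ({ω | M1 ω = m} ∩ {ω | M0 ω = m})).toReal with hr'
  -- μ{M0 = m} in terms of q
  have hM0m : (μ {ω | M0 ω = m}).toReal + q = 1 := by
    have hcmp : {ω | M0 ω = m}ᶜ = {ω | M0 ω = 1 - m} := by
      ext ω
      simp only [Set.mem_compl_iff, Set.mem_setOf_eq]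
      have := hM0bin ω; omega
    have := nu_compl {ω | M0 ω = m} mM0
    rw [hcmp] at this
    linarith
  -- F1 : 1 < a + b
  rw [ha, hb] at hemp
  -- F2 : a + b + pn ≤ 1 + pp
  have hF2 : a + b + pn ≤ 1 + pp := by
    have hie := nu_ie {ω | Y1 ω = y ∧ M1 ω = m} {ω | Y0 ω = 1 - y ∧ M0 ω = m} mB
    have hinter : {ω | Y1 ω = y ∧ M1 ω = m} ∩ {ω | Y0 ω = 1 - y ∧ M0 ω = m}
        = {ω | Y1 ω = y ∧ Y0 ω = 1 - y ∧ M1 ω = m ∧ M0 ω = m} := by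
      ext ω
      simp only [Set.mem_inter_iff, Set.mem_setOf_eq]
      tauto
    rw [hinter] at hie
    have hsub : {ω | Y1 ω = y ∧ M1 ω = m} ∪ {ω | Y0 ω = 1 - y ∧ M0 ω = m}
        ⊆ {ω | Y1 ω = 1 - y ∧ Y0 ω = y ∧ M1 ω = m ∧ M0 ω = m}ᶜ := by
      rintro ω (⟨h1, h2⟩ | ⟨h1, h2⟩) ⟨g1, g2, g3, g4⟩ <;> omega
    have h1 := nu_mono _ _ hsub
    have h2 := nu_compl _ (m4 (1 - y) y m m)
    linarith
  -- F3 : a ≤ p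
  have hF3 : a ≤ p := nu_mono _ _ (fun ω h => h.2)
  -- F3' : b + q ≤ 1
  have hF3' : b + q ≤ 1 := by
    have : b ≤ (μ {ω | M0 ω = m}).toReal :=
      nu_mono _ {ω | M0 ω = m} (fun ω h => h.2)
    linarith
  -- F4 : p ≤ q + r
  have hF4 : p ≤ q + r := by
    have hie := nu_ie {ω | M1 ω = m} {ω | M0 ω = m} mM0
    have := nu_le_one ({ω | M1 ω = m} ∪ {ω | M0 ω = m})
    linarith
  -- F5 : pn + c2 + a ≤ p
  have hF5 : pn + c2 + a ≤ p := by
    have hd1 : Disjoint {ω | Y1 ω = 1 - y ∧ Y0 ω = y ∧ M1 ω = m ∧ M0 ω = m}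
        {ω | Y1 ω = 1 - y ∧ Y0 ω = 1 - y ∧ M1 ω = m ∧ M0 ω = m} := by
      rw [Set.disjoint_left]
      rintro ω ⟨g1, g2, g3, g4⟩ ⟨f1, f2, f3, f4⟩; omega
    have hd2 : Disjoint ({ω | Y1 ω = 1 - y ∧ Y0 ω = y ∧ M1 ω = m ∧ M0 ω = m}
        ∪ {ω | Y1 ω = 1 - y ∧ Y0 ω = 1 - y ∧ M1 ω = m ∧ M0 ω = m})
        {ω | Y1 ω = y ∧ M1 ω = m} := by
      rw [Set.disjoint_left]
      rintro ω (⟨g1, g2, g3, g4⟩ | ⟨g1, g2, g3, g4⟩) ⟨f1, f2⟩ <;> omega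
    have e1 := nu_add _ _ (m4 (1 - y) (1 - y) m m) hd1
    have e2 := nu_add _ _ mA hd2
    have hsub : ({ω | Y1 ω = 1 - y ∧ Y0 ω = y ∧ M1 ω = m ∧ M0 ω = m}
        ∪ {ω | Y1 ω = 1 - y ∧ Y0 ω = 1 - y ∧ M1 ω = m ∧ M0 ω = m})
        ∪ {ω | Y1 ω = y ∧ M1 ω = m} ⊆ {ω | M1 ω = m} := by
      rintro ω ((⟨g1, g2, g3, g4⟩ | ⟨g1, g2, g3, g4⟩) | ⟨g1, g2⟩) <;> exact ‹M1 ω = m›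
    have := nu_mono _ _ hsub
    linarith
  -- F5' : pn + c1 + b + q ≤ 1
  have hF5' : pn + c1 + b + q ≤ 1 := by
    have hd1 : Disjoint {ω | Y1 ω = 1 - y ∧ Y0 ω = y ∧ M1 ω = m ∧ M0 ω = m}
        {ω | Y1 ω = y ∧ Y0 ω = y ∧ M1 ω = m ∧ M0 ω = m} := by
      rw [Set.disjoint_left]
      rintro ω ⟨g1, g2, g3, g4⟩ ⟨f1, f2, f3, f4⟩; omega
    have hd2 : Disjoint ({ω | Y1 ω = 1 - y ∧ Y0 ω = y ∧ M1 ω = m ∧ M0 ω = m}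
        ∪ {ω | Y1 ω = y ∧ Y0 ω = y ∧ M1 ω = m ∧ M0 ω = m})
        {ω | Y0 ω = 1 - y ∧ M0 ω = m} := by
      rw [Set.disjoint_left]
      rintro ω (⟨g1, g2, g3, g4⟩ | ⟨g1, g2, g3, g4⟩) ⟨f1, f2⟩ <;> omega
    have e1 := nu_add _ _ (m4 y y m m) hd1
    have e2 := nu_add _ _ mB hd2
    have hsub : ({ω | Y1 ω = 1 - y ∧ Y0 ω = y ∧ M1 ω = m ∧ M0 ω = m}
        ∪ {ω | Y1 ω = y ∧ Y0 ω = y ∧ M1 ω = m ∧ M0 ω = m})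
        ∪ {ω | Y0 ω = 1 - y ∧ M0 ω = m} ⊆ {ω | M0 ω = m} := by
      rintro ω ((⟨g1, g2, g3, g4⟩ | ⟨g1, g2, g3, g4⟩) | ⟨g1, g2⟩) <;> exact ‹M0 ω = m›
    have := nu_mono _ _ hsub
    linarith
  -- F6 : r = pp + pn + c1 + c2
  have hF6 : r = pp + pn + c1 + c2 := by
    have hd1 : Disjoint {ω | Y1 ω = y ∧ Y0 ω = 1 - y ∧ M1 ω = m ∧ M0 ω = m}
        {ω | Y1 ω = 1 - y ∧ Y0 ω = y ∧ M1 ω = m ∧ M0 ω = m} := by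
      rw [Set.disjoint_left]
      rintro ω ⟨g1, g2, g3, g4⟩ ⟨f1, f2, f3, f4⟩; omega
    have hd2 : Disjoint ({ω | Y1 ω = y ∧ Y0 ω = 1 - y ∧ M1 ω = m ∧ M0 ω = m}
        ∪ {ω | Y1 ω = 1 - y ∧ Y0 ω = y ∧ M1 ω = m ∧ M0 ω = m})
        {ω | Y1 ω = y ∧ Y0 ω = y ∧ M1 ω = m ∧ M0 ω = m} := by
      rw [Set.disjoint_left]
      rintro ω (⟨g1, g2, g3, g4⟩ | ⟨g1, g2, g3, g4⟩) ⟨f1, f2, f3, f4⟩ <;> omega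
    have hd3 : Disjoint (({ω | Y1 ω = y ∧ Y0 ω = 1 - y ∧ M1 ω = m ∧ M0 ω = m}
        ∪ {ω | Y1 ω = 1 - y ∧ Y0 ω = y ∧ M1 ω = m ∧ M0 ω = m})
        ∪ {ω | Y1 ω = y ∧ Y0 ω = y ∧ M1 ω = m ∧ M0 ω = m})
        {ω | Y1 ω = 1 - y ∧ Y0 ω = 1 - y ∧ M1 ω = m ∧ M0 ω = m} := by
      rw [Set.disjoint_left]
      rintro ω ((⟨g1, g2, g3, g4⟩ | ⟨g1, g2, g3, g4⟩) | ⟨g1, g2, g3, g4⟩)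
        ⟨f1, f2, f3, f4⟩ <;> omega
    have hpart : {ω | M1 ω = m} ∩ {ω | M0 ω = m}
        = (({ω | Y1 ω = y ∧ Y0 ω = 1 - y ∧ M1 ω = m ∧ M0 ω = m}
        ∪ {ω | Y1 ω = 1 - y ∧ Y0 ω = y ∧ M1 ω = m ∧ M0 ω = m})
        ∪ {ω | Y1 ω = y ∧ Y0 ω = y ∧ M1 ω = m ∧ M0 ω = m})
        ∪ {ω | Y1 ω = 1 - y ∧ Y0 ω = 1 - y ∧ M1 ω = m ∧ M0 ω = m} := by
      ext ω
      simp only [Set.mem_inter_iff, Set.mem_union, Set.mem_setOf_eq]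
      have := hY1bin ω; have := hY0bin ω
      omega
    have e1 := nu_add _ _ (m4 (1 - y) y m m) hd1
    have e2 := nu_add _ _ (m4 y y m m) hd2
    have e3 := nu_add _ _ (m4 (1 - y) (1 - y) m m) hd3
    rw [hr', hpart, e3, e2, e1]
  -- conclusions
  have hrpos : (0 : ℝ) < r := by linarith
  have hRpos : 0 < μ ({ω | M1 ω = m} ∩ {ω | M0 ω = m}) := by
    rcases eq_or_lt_of_le (zero_le : 0 ≤ μ ({ω | M1 ω = m} ∩ {ω | M0 ω = m})) with h | h
    · exfalso
      rw [hr', ← h] at hrpos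
      simp at hrpos
    · exact h
  refine ⟨hRpos, ?_, ?_⟩
  · rw [ha, hb, hp, hq]
    exact aux_ineq a b p q pp pn c1 c2 r hemp hF2 hF3 hF3' hF4 hF5 hF5' hF6
      ENNReal.toReal_nonneg
  · have e1 : {ω | Y1 ω = y ∧ Y0 ω = 1 - y} ∩ {ω | M1 ω = m ∧ M0 ω = m}
        = {ω | Y1 ω = y ∧ Y0 ω = 1 - y ∧ M1 ω = m ∧ M0 ω = m} := by
      ext ω
      simp only [Set.mem_inter_iff, Set.mem_setOf_eq]
      tauto
    have e2 : {ω | Y1 ω = 1 - y ∧ Y0 ω = y} ∩ {ω | M1 ω = m ∧ M0 ω = m}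
        = {ω | Y1 ω = 1 - y ∧ Y0 ω = y ∧ M1 ω = m ∧ M0 ω = m} := by
      ext ω
      simp only [Set.mem_inter_iff, Set.mem_setOf_eq]
      tauto
    have e3 : ({ω | M1 ω = m} ∩ {ω | M0 ω = m}) = {ω | M1 ω = m ∧ M0 ω = m} := rfl
    simp only [condP, Pc]
    rw [e1, e2, ← e3, hr', sub_div]
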